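/- Let V be a Norden vector space and W a nondegenerate subspace with tangential endomorphism P satisfying P² = λ·Id with λ < 0 (type 1 or type 2 slant). Then the restriction of g to W has neutral signature: for every space-like u ∈ W, Pu is time-like, and u, Pu span a nondegenerate plane of signature (1,1). -/
import Mathlib


theorem stmt_6 {V : Type*} [AddCommGroup V] [Module ℝ V]
    (g : LinearMap.BilinForm ℝ V) (J : V →ₗ[ℝ] V)
    (hsymm : ∀ u v, g u v = g v u)
    (hnondeg : ∀ u, (∀ v, g u v = 0) → u = 0)
    (hJ2 : ∀ u, J (J u) = -u)
    (hg : ∀ u v, g (J u) (J v) = -g u v)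
    (W : Submodule ℝ V)
    (hWnondeg : ∀ w ∈ W, (∀ w' ∈ W, g w w' = 0) → w = 0)
    (P : V → V)
    (hPW : ∀ u ∈ W, P u ∈ W)
    (horth : ∀ u ∈ W, ∀ w ∈ W, g (J u - P u) w = 0)
    (lam : ℝ) (hlam : lam < 0)
    (hP2 : ∀ u ∈ W, P (P u) = lam • u) :
    ∀ u ∈ W, 0 < g u u →
      g (P u) (P u) < 0 ∧
      g u u * g (P u) (P u) - (g u (P u)) ^ 2 < 0 ∧
      LinearIndependent ℝ ![u, P u] := by
  intro u hu hguu
  -- g(Ju, v) = g(u, Jv)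
  have hswap : ∀ a b : V, g (J a) b = g a (J b) := by
    intro a b
    have := hg a (J b)
    rw [hJ2 b] at this
    simpa using this
  -- g(Ju, w) = g(Pu, w) for w ∈ W
  have hJP : ∀ a ∈ W, ∀ w ∈ W, g (J a) w = g (P a) w := by
    intro a ha w hw
    have := horth a ha w hw
    simp only [map_sub, LinearMap.sub_apply] at this
    linarith
  -- key: g(Pu, Pu) = lam * g(u,u)
  have hkey : g (P u) (P u) = lam * g u u := by
    have h1 : g (P u) (P u) = g (J u) (P u) := (hJP u hu (P u) (hPW u hu)).symm
    have h2 : g (J u) (P u) = g u (J (P u)) := hswap u (P u)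
    have h3 : g (J (P u)) u = g (P (P u)) u := hJP (P u) (hPW u hu) u hu
    have h4 : g (P (P u)) u = lam * g u u := by
      rw [hP2 u hu]; simp [mul_comm]
    rw [h1, h2, hsymm u (J (P u)), h3, h4]
  have hneg : g (P u) (P u) < 0 := by
    rw [hkey]; exact mul_neg_of_neg_of_pos hlam hguu
  refine ⟨hneg, ?_, ?_⟩
  · have h1 : g u u * g (P u) (P u) < 0 := mul_neg_of_pos_of_neg hguu hneg
    nlinarith [sq_nonneg (g u (P u))]
  · rw [LinearIndependent.pair_iff]
    intro s t hst
    have hune : u ≠ 0 := by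
      intro h0; rw [h0] at hguu; simp at hguu
    have ht : t = 0 := by
      by_contra htne
      have h1 : t • P u = -(s • u) := by
        rw [eq_neg_iff_add_eq_zero, add_comm]; exact hst
      have hPu : P u = (-(t⁻¹ * s)) • u := by
        have : t⁻¹ • (t • P u) = t⁻¹ • (-(s • u)) := by rw [h1]
        rw [smul_smul, inv_mul_cancel₀ htne, one_smul] at this
        rw [this, smul_neg, smul_smul, neg_smul]
      have : g (P u) (P u) = (t⁻¹ * s) ^ 2 * g u u := by
        rw [hPu]; simp [smul_eq_mul]; ring
      nlinarith [sq_nonneg (t⁻¹ * s)]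
    have hs : s = 0 := by
      rw [ht, zero_smul, add_zero] at hst
      exact (smul_eq_zero.mp hst).resolve_right hune
    exact ⟨hs, ht⟩
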